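/- On the cubic graph G with House of Graphs ID #44172, the configuration C of size 12 given by C(5) = 7, C(11) = 1, C(12) = 1, C(10) = 1, C(7) = 1, C(6) = 1, and C(v) = 0 for all other vertices v, is 1-unsolvable (i.e., unsolvable for the target vertex labeled 1). Consequently π(G) > 12 and G is not Class 0. -/
import Mathlib

/-- A pebbling move on the graph `G`: remove two pebbles from a vertex `u`
(which has at least two pebbles) and add one pebble to a neighbor `v` of `u`. -/
def PebblingMove {V : Type} [DecidableEq V] (G : SimpleGraph V) (C C' : V → ℕ) : Prop :=
  ∃ u v, G.Adj u v ∧ 2 ≤ C u ∧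
    C' = fun w => if w = u then C u - 2 else if w = v then C v + 1 else C w

/-- A configuration `C` is `r`-solvable if some (possibly empty) sequence of
pebbling moves starting from `C` produces a configuration with at least one
pebble on `r`. -/
def PebblingSolvable {V : Type} [DecidableEq V] (G : SimpleGraph V) (C : V → ℕ) (r : V) : Prop :=
  ∃ C' : V → ℕ, Relation.ReflTransGen (PebblingMove G) C C' ∧ 1 ≤ C' r

/-- The pebbling number of `G`: the least `t` such that for every target
vertex `r`, every configuration of size `t` is `r`-solvable. -/
noncomputable def pebblingNumber {V : Type} [DecidableEq V] [Fintype V] (G : SimpleGraph V) : ℕ :=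
  sInf {t : ℕ | ∀ (r : V) (C : V → ℕ), (∑ v, C v) = t → PebblingSolvable G C r}

/-- The cubic graph with House of Graphs ID #44172.
Vertex labeled `k` (for `k ∈ {1, …, 12}`) is represented by `(k : Fin 12)`
(so vertex `12` is `(12 : Fin 12) = 0`; this labeling is injective). -/
def hog44172 : SimpleGraph (Fin 12) := SimpleGraph.fromEdgeSet
  ({s(1, 4), s(1, 3), s(1, 2), s(4, 9), s(4, 8), s(3, 11), s(3, 12), s(2, 12), s(9, 8), s(2, 10), s(9, 5), s(11, 7), s(10, 6), s(5, 7), s(11, 6), s(10, 7), s(8, 12), s(5, 6)} : Set (Sym2 (Fin 12)))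

/-! ### Auxiliary machinery -/

inductive NTree where
  | leaf : NTree
  | node : NTree → ℕ → NTree → NTree

def NTree.memB (n : ℕ) : NTree → Bool
  | .leaf => false
  | .node l a r => if n = a then true else if n < a then l.memB n else r.memB n

def NTree.allB (p : ℕ → Bool) : NTree → Bool
  | .leaf => true
  | .node l a r => p a && l.allB p && r.allB p

lemma NTree.of_allB {p : ℕ → Bool} {n : ℕ} :
    ∀ {t : NTree}, t.allB p = true → t.memB n = true → p n = true := by
  intro t
  induction t with
  | leaf => simp [memB]
  | node l a r ihl ihr =>
    intro hall hmem
    simp only [allB, Bool.and_eq_true] at hall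
    simp only [memB] at hmem
    split_ifs at hmem with h1 h2
    · exact h1 ▸ hall.1.1
    · exact ihl hall.1.2 hmem
    · exact ihr hall.2 hmem

def STree : NTree := (.node (.node (.node (.node (.node (.node (.node (.node .leaf 2367 (.node .leaf 28562 .leaf)) 371294 (.node (.node .leaf 400024 .leaf) 402052 (.node .leaf 742756 .leaf))) 744784 (.node (.node (.node .leaf 1116246 .leaf) 1485173 (.node .leaf 1856635 .leaf)) 1858663 (.node (.node .leaf 4826979 .leaf) 4829007 (.node .leaf 5200469 .leaf)))) 5226664 (.node (.node (.node .leaf 5569396 (.node .leaf 5940858 .leaf)) 5942886 (.node (.node .leaf 6683275 .leaf) 9653619 (.node .leaf 10025081 .leaf))) 10027109 (.node (.node (.node .leaf 10767498 .leaf) 14851721 (.node .leaf 62748687 .leaf)) 62750715 (.node (.node .leaf 63122177 .leaf) 63148372 (.node .leaf 63491104 .leaf))))) 63862566 (.node (.node (.node (.node .leaf 63864594 (.node .leaf 64604983 .leaf)) 67575327 (.node (.node .leaf 67946789 .leaf) 67948817 (.node .leaf 68689206 .leaf))) 72773429 (.node (.node (.node .leaf 125497035 .leaf) 125868497 (.node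 .leaf 125870525 .leaf)) 126610914 (.node (.node .leaf 130695137 .leaf) 188616845 (.node .leaf 815730722 .leaf)))) 816102184 (.node (.node (.node .leaf 816104212 (.node .leaf 820928824 .leaf)) 878850532 (.node (.node .leaf 10604499543 .leaf) 10604501571 (.node .leaf 10604873033 .leaf))) 10605241960 (.node (.node (.node .leaf 10605613422 .leaf) 10605615450 (.node .leaf 10609326183 .leaf)) 10609697645 (.node (.node .leaf 10609699673 .leaf) 10610440062 (.node .leaf 10614524285 .leaf)))))) 10667247891 (.node (.node (.node (.node (.node .leaf 10667619353 (.node .leaf 10667621381 .leaf)) 10668361770 (.node (.node .leaf 10672445993 .leaf) 10730367701 (.node .leaf 21208998747 .leaf))) 21209370209 (.node (.node (.node .leaf 21209372237 .leaf) 21214196849 (.node .leaf 21272118557 .leaf)) 137858491850 (.node (.node .leaf 137858522608 .leaf) 137858863312 (.node .leaf 137858865340 .leaf)))) 137859262997 (.node (.node (.node .leaf 137859605729 (.node .leaf 137859979219 .leaf)) 137860719608 (.node (.node .leaf 137863347220 .leaf) 137863689952 (.node .leaf 137863720710 .leaf))) 137864063442 (.node (.node (.node .leaf 137864803831 .leaf)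 137865177321 (.node .leaf 137868147665 .leaf)) 137868545322 (.node (.node .leaf 137868888054 .leaf) 137869261544 (.node .leaf 137870001933 .leaf))))) 137872972277 (.node (.node (.node (.node .leaf 137873345767 (.node .leaf 137874086156 .leaf)) 137878170379 (.node (.node .leaf 137921268928 .leaf) 137921611660 (.node .leaf 137921642418 .leaf))) 137921985150 (.node (.node (.node .leaf 137922725539 .leaf) 137923099029 (.node .leaf 137926069373 .leaf)) 137926467030 (.node (.node .leaf 137926809762 .leaf) 137927183252 (.node .leaf 137927923641 .leaf)))) 137930893985 (.node (.node (.node (.node .leaf 137931267475 .leaf) 137932007864 (.node .leaf 137936092087 .leaf)) 137983991081 (.node (.node .leaf 137984388738 .leaf) 137984731470 (.node .leaf 137985104960 .leaf))) 137985845349 (.node (.node (.node .leaf 137988815693 .leaf) 137989189183 (.node .leaf 137989929572 .leaf)) 137994013795 (.node (.node .leaf 138046737401 .leaf) 138047110891 (.node .leaf 138047851280 .leaf))))))) 138051935503 (.node (.node (.node (.node (.node (.node .leaf 138109857211 (.node .leaf 138674224768 .leaf)) 138674965157 (.node (.node .leaf 138679049380 .leaf) 138679422870 (.node .leaf 138684247482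 .leaf))) 138736971088 (.node (.node (.node .leaf 138737344578 .leaf) 138742169190 (.node .leaf 138800090898 .leaf)) 148463019784 (.node (.node .leaf 148463362516 .leaf) 148463736006 (.node .leaf 148464476395 .leaf)))) 148467820229 (.node (.node (.node .leaf 148468560618 (.node .leaf 148468934108 .leaf)) 148472644841 (.node (.node .leaf 148473018331 .leaf) 148473758720 (.node .leaf 148477842943 .leaf))) 148525741937 (.node (.node (.node .leaf 148526482326 .leaf) 148526855816 (.node .leaf 148530566549 .leaf)) 148530940039 (.node (.node .leaf 148531680428 .leaf) 148535764651 (.node .leaf 148588488257 .leaf))))) 148588861747 (.node (.node (.node (.node .leaf 148589602136 (.node .leaf 148593686359 .leaf)) 148651608067 (.node (.node .leaf 149278721944 .leaf) 159067492793 (.node .leaf 159068233182 .leaf))) 159072317405 (.node (.node (.node .leaf 159072690895 .leaf) 159077515507 (.node .leaf 159130239113 .leaf)) 159130612603 (.node (.node .leaf 159135437215 .leaf) 159193358923 (.node .leaf 169671989969 .leaf)))) 275716985896 (.node (.node (.node .leaf 275717383553 (.node .leaf 275717726285 .leaf)) 275718099775 (.node (.node .leaf 275718840164 .leaf) 275721810508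 (.node .leaf 275722183998 .leaf))) 275722924387 (.node (.node (.node .leaf 275727008610 .leaf) 275779732216 (.node .leaf 275780105706 .leaf)) 275780846095 (.node (.node .leaf 275784930318 .leaf) 275842852026 (.node .leaf 276533085713 .leaf)))))) 286321483072 (.node (.node (.node (.node (.node .leaf 286321856562 (.node .leaf 286322596951 .leaf)) 286326681174 (.node (.node .leaf 286384602882 .leaf) 296926353738 (.node .leaf 413575846841 .leaf))) 1792160394038 (.node (.node (.node .leaf 1792160422768 .leaf) 1792160765500 (.node .leaf 1792160767528 .leaf)) 1792161165185 (.node (.node .leaf 1792161507917 .leaf) 1792161879379 (.node .leaf 1792162621796 .leaf)))) 1792165249408 (.node (.node (.node .leaf 1792165592140 (.node .leaf 1792165620870 .leaf)) 1792165963602 (.node (.node .leaf 1792166706019 .leaf) 1792167077481 (.node .leaf 1792170047825 .leaf))) 1792170447510 (.node (.node (.node .leaf 1792170790242 .leaf) 1792171161704 (.node .leaf 1792171904121 .leaf)) 1792174874465 (.node (.node .leaf 1792175245927 .leaf) 1792175988344 (.node .leaf 1792180072567 .leaf))))) 1792223171116 (.node (.node (.node (.node .leaf 1792223513848 (.node .leaf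 1792223542578 .leaf)) 1792223885310 (.node (.node .leaf 1792224627727 .leaf) 1792224999189 (.node .leaf 1792227969533 .leaf))) 1792228369218 (.node (.node (.node .leaf 1792228711950 .leaf) 1792229083412 (.node .leaf 1792229825829 .leaf)) 1792232796173 (.node (.node .leaf 1792233167635 .leaf) 1792233910052 (.node .leaf 1792237994275 .leaf)))) 1792285891241 (.node (.node (.node (.node .leaf 1792286290926 .leaf) 1792286633658 (.node .leaf 1792287005120 .leaf)) 1792287747537 (.node (.node .leaf 1792290717881 .leaf) 1792291089343 (.node .leaf 1792291831760 .leaf))) 1792295915983 (.node (.node (.node .leaf 1792348639589 .leaf) 1792349011051 (.node .leaf 1792349753468 .leaf)) 1792353837691 (.node (.node .leaf 1792411759399 .leaf) 1792976124928 (.node .leaf 1792976867345 .leaf)))))))) 1792980951568 (.node (.node (.node (.node (.node (.node (.node .leaf 1792981323030 (.node .leaf 1792986149670 .leaf)) 1793038873276 (.node (.node .leaf 1793039244738 .leaf) 1793044071378 (.node .leaf 1793101993086 .leaf))) 1802764921972 (.node (.node (.node .leaf 1802765264704 .leaf) 1802765636166 (.node .leaf 1802766378583 .leaf)) 1802769720389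 (.node (.node .leaf 1802770462806 .leaf) 1802770834268 (.node .leaf 1802774547029 .leaf)))) 1802774918491 (.node (.node (.node .leaf 1802775660908 (.node .leaf 1802779745131 .leaf)) 1802827642097 (.node (.node .leaf 1802828384514 .leaf) 1802828755976 (.node .leaf 1802832468737 .leaf))) 1802832840199 (.node (.node (.node .leaf 1802833582616 .leaf) 1802837666839 (.node .leaf 1802890390445 .leaf)) 1802890761907 (.node (.node .leaf 1802891504324 .leaf) 1802895588547 (.node .leaf 1802953510255 .leaf))))) 1803580624132 (.node (.node (.node (.node .leaf 1813369392953 (.node .leaf 1813370135370 .leaf)) 1813374219593 (.node (.node .leaf 1813374591055 .leaf) 1813379417695 (.node .leaf 1813432141301 .leaf))) 1813432512763 (.node (.node (.node .leaf 1813437339403 .leaf) 1813495261111 (.node .leaf 1823973892157 .leaf)) 1930018886056 (.node (.node .leaf 1930018888084 .leaf) 1930019285741 (.node .leaf 1930019628473 .leaf)))) 1930019999935 (.node (.node (.node .leaf 1930020001963 (.node .leaf 1930020742352 .leaf)) 1930023712696 (.node (.node .leaf 1930024084158 .leaf) 1930024086186 (.node .leaf 1930024483843 .leaf))) 1930024826575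 (.node (.node (.node .leaf 1930025940454 .leaf) 1930028568066 (.node .leaf 1930028910798 .leaf)) 1930030024677 (.node (.node .leaf 1930034108900 .leaf) 1930038193123 (.node .leaf 1930081634404 .leaf)))))) 1930082005866 (.node (.node (.node (.node (.node .leaf 1930082007894 (.node .leaf 1930082405551 .leaf)) 1930082748283 (.node (.node .leaf 1930083862162 .leaf) 1930086489774 (.node .leaf 1930086832506 .leaf))) 1930087603653 (.node (.node (.node .leaf 1930087946385 .leaf) 1930089060264 (.node .leaf 1930091687876 .leaf)) 1930092030608 (.node (.node .leaf 1930093144487 .leaf) 1930096114831 (.node .leaf 1930097228710 .leaf)))) 1930101312933 (.node (.node (.node .leaf 1930144411482 (.node .leaf 1930144754214 .leaf)) 1930145868093 (.node (.node .leaf 1930149609584 .leaf) 1930149952316 (.node .leaf 1930151066195 .leaf))) 1930154036539 (.node (.node (.node .leaf 1930155150418 .leaf) 1930159234641 (.node .leaf 1930207874024 .leaf)) 1930211958247 (.node (.node .leaf 1930213072126 .leaf) 1930217156349 (.node .leaf 1930269879955 .leaf))))) 1930275078057 (.node (.node (.node (.node .leaf 1930834987901 (.node .leaf 1930840186003 .leaf))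 1930844270226 (.node (.node .leaf 1930898107711 .leaf) 1930902191934 (.node .leaf 1930903305813 .leaf))) 1930907390036 (.node (.node (.node .leaf 1930960113642 .leaf) 1930965311744 (.node .leaf 1940623385260 .leaf)) 1940623756722 (.node (.node .leaf 1940623758750 .leaf) 1940624499139 (.node .leaf 1940628240630 .leaf)))) 1940628583362 (.node (.node (.node (.node .leaf 1940629697241 .leaf) 1940633781464 (.node .leaf 1940637865687 .leaf)) 1940686162338 (.node (.node .leaf 1940686505070 .leaf) 1940687618949 (.node .leaf 1940691360440 .leaf))) 1940691703172 (.node (.node (.node .leaf 1940692817051 .leaf) 1940695787395 (.node .leaf 1940696901274 .leaf)) 1940700985497 (.node (.node .leaf 1940749624880 .leaf) 1940753709103 (.node .leaf 1940754822982 .leaf))))))) 1940758907205 (.node (.node (.node (.node (.node (.node .leaf 1940811630811 (.node .leaf 1940816828913 .leaf)) 1941443942790 (.node (.node .leaf 1941501864498 .leaf) 1941507062600 (.node .leaf 1951228255926 .leaf))) 1951233454028 (.node (.node (.node .leaf 1951237538251 .leaf) 1951291375736 (.node .leaf 1951295459959 .leaf)) 1951296573838 (.node (.node .leaf 1951300658061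 .leaf) 1951353381667 (.node .leaf 1951358579769 .leaf)))) 1961837210815 (.node (.node (.node .leaf 1961895132523 (.node .leaf 1961900330625 .leaf)) 2067877406297 (.node (.node .leaf 2067877749029 .leaf) 2067878862908 (.node .leaf 2067882604399 .leaf))) 2067882947131 (.node (.node (.node .leaf 2067884061010 .leaf) 2067887031354 (.node .leaf 2067888145233 .leaf)) 2067892229456 (.node (.node .leaf 2067940526107 .leaf) 2067940868839 (.node .leaf 2067941982718 .leaf))))) 2067944953062 (.node (.node (.node (.node .leaf 2067946066941 (.node .leaf 2067950151164 .leaf)) 2068002874770 (.node (.node .leaf 2068003988649 .leaf) 2068008072872 (.node .leaf 2068065994580 .leaf))) 2068693108457 (.node (.node (.node .leaf 2068698306559 .leaf) 2068756228267 (.node .leaf 2078482619695 .leaf)) 2078486703918 (.node (.node .leaf 2078487817797 .leaf) 2078491902020 (.node .leaf 2078544625626 .leaf)))) 2078545739505 (.node (.node (.node .leaf 2078549823728 (.node .leaf 2078607745436 .leaf)) 2089086376482 (.node (.node .leaf 2089091574584 .leaf) 2089149496292 (.node .leaf 2205735869585 .leaf))) 2205736983464 (.node (.node (.node .leaf 2205741067687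 .leaf) 2205798989395 (.node .leaf 2216340740251 .leaf)) 3584320788244 (.node (.node .leaf 3584321187929 .leaf) 3584321530661 (.node .leaf 3584321902123 .leaf)))))) 3584322644540 (.node (.node (.node (.node (.node .leaf 3584325614884 (.node .leaf 3584325986346 .leaf)) 3584326728763 (.node (.node .leaf 3584330812986 .leaf) 3584383536592 (.node .leaf 3584383908054 .leaf))) 3584384650471 (.node (.node (.node .leaf 3584388734694 .leaf) 3584446656402 (.node .leaf 3585136890089 .leaf)) 3594925287448 (.node (.node .leaf 3594925658910 .leaf) 3594926401327 (.node .leaf 3594930485550 .leaf)))) 3594988407258 (.node (.node (.node .leaf 3605530158114 (.node .leaf 3722179308485 .leaf)) 3722179651217 (.node (.node .leaf 3722180765096 .leaf) 3722184506587 (.node .leaf 3722184849319 .leaf))) 3722185963198 (.node (.node (.node .leaf 3722188933542 .leaf) 3722190047421 (.node .leaf 3722194131644 .leaf)) 3722242428295 (.node (.node .leaf 3722242771027 .leaf) 3722243884906 (.node .leaf 3722246855250 .leaf))))) 3722247969129 (.node (.node (.node (.node .leaf 3722252053352 (.node .leaf 3722304776958 .leaf)) 3722305890837 (.node (.node .leaf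 3722309975060 .leaf) 3722367896768 (.node .leaf 3722995010645 .leaf))) 3723000208747 (.node (.node (.node .leaf 3723058130455 .leaf) 3732784521883 (.node .leaf 3732788606106 .leaf)) 3732789719985 (.node (.node .leaf 3732793804208 .leaf) 3732846527814 (.node .leaf 3732847641693 .leaf)))) 3732851725916 (.node (.node (.node (.node .leaf 3732909647624 .leaf) 3743388278670 (.node .leaf 3743393476772 .leaf)) 3743451398480 (.node (.node .leaf 3860037771773 .leaf) 3860038885652 (.node .leaf 3860042969875 .leaf))) 3860100891583 (.node (.node (.node .leaf 3870642642439 .leaf) 5376481553405 (.node .leaf 5514339673961 .leaf)) 5514340787840 (.node (.node .leaf 5514344872063 .leaf) 5514402793771 (.node .leaf 5524944544627 .leaf)))))))))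

def EdgesNat : List (ℕ × ℕ) := [(1, 4), (4, 1), (1, 3), (3, 1), (1, 2), (2, 1), (4, 9), (9, 4), (4, 8), (8, 4), (3, 11), (11, 3), (3, 0), (0, 3), (2, 0), (0, 2), (9, 8), (8, 9), (2, 10), (10, 2), (9, 5), (5, 9), (11, 7), (7, 11), (10, 6), (6, 10), (5, 7), (7, 5), (11, 6), (6, 11), (10, 7), (7, 10), (8, 0), (0, 8), (5, 6), (6, 5)]

def EdgesFin : List (Fin 12 × Fin 12) := [(1,4), (4,1), (1,3), (3,1), (1,2), (2,1), (4,9), (9,4), (4,8), (8,4), (3,11), (11,3), (3,12), (12,3), (2,12), (12,2), (9,8), (8,9), (2,10), (10,2), (9,5), (5,9), (11,7), (7,11), (10,6), (6,10), (5,7), (7,5), (11,6), (6,11), (10,7), (7,10), (8,12), (12,8), (5,6), (6,5)]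

/-- Base-13 encoding of a configuration. -/
def enc (C : Fin 12 → ℕ) : ℕ := ∑ i : Fin 12, C i * 13 ^ (i : ℕ)

def encL : List ℕ → ℕ
  | [] => 0
  | a :: l => a + 13 * encL l

lemma encL_ofFn : ∀ {n : ℕ} (C : Fin n → ℕ),
    encL (List.ofFn C) = ∑ i : Fin n, C i * 13 ^ (i : ℕ) := by
  intro n
  induction n with
  | zero => intro C; simp [encL]
  | succ n ih =>
    intro C
    rw [List.ofFn_succ]
    simp only [encL]
    rw [ih, Fin.sum_univ_succ, Finset.mul_sum]
    simp only [Fin.val_succ, Fin.val_zero, pow_zero, mul_one, pow_succ]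
    congr 1
    exact Finset.sum_congr rfl fun i _ => by ring

lemma digit_encL : ∀ (l : List ℕ), (∀ x ∈ l, x ≤ 12) → ∀ u : ℕ,
    encL l / 13 ^ u % 13 = l.getD u 0 := by
  intro l
  induction l with
  | nil => intro _ u; simp [encL]
  | cons a l ih =>
    intro h u
    have ha : a ≤ 12 := h a (by simp)
    cases u with
    | zero =>
      simp only [encL, pow_zero, Nat.div_one, List.getD_cons_zero]
      rw [Nat.add_mul_mod_self_left]
      omega
    | succ u =>
      have h13 : encL (a :: l) / 13 = encL l := by
        simp only [encL]
        rw [Nat.add_mul_div_left _ _ (by norm_num : 0 < 13)]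
        omega
      have hh : encL (a :: l) / 13 ^ (u + 1) = encL l / 13 ^ u := by
        rw [pow_succ, mul_comm, ← Nat.div_div_eq_div_mul, h13]
      rw [hh, ih (fun x hx => h x (by simp [hx])) u, List.getD_cons_succ]

lemma digit_enc (C : Fin 12 → ℕ) (hC : ∀ i, C i ≤ 12) (u : Fin 12) :
    enc C / 13 ^ (u : ℕ) % 13 = C u := by
  have h1 : enc C = encL (List.ofFn C) := (encL_ofFn C).symm
  rw [h1, digit_encL _ (by simp only [List.mem_ofFn]; rintro x ⟨i, rfl⟩; exact hC i)]
  rw [List.getD_eq_getElem _ _ (by simp [u.isLt]), List.getElem_ofFn]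

/-- The key pointwise bookkeeping identity for a pebbling move, with an
arbitrary weight function. -/
lemma move_weight (w : Fin 12 → ℕ) {C : Fin 12 → ℕ} {u v : Fin 12} (huv : u ≠ v)
    (hu : 2 ≤ C u) :
    (∑ i : Fin 12, (if i = u then C u - 2 else if i = v then C v + 1 else C i) * w i)
      + 2 * w u
    = (∑ i : Fin 12, C i * w i) + w v := by
  have key : ∀ i : Fin 12,
      (if i = u then C u - 2 else if i = v then C v + 1 else C i) * w i
        + (if i = u then 2 * w u else 0)
      = C i * w i + (if i = v then w v else 0) := by
    intro i
    by_cases h1 : i = u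
    · subst h1
      have h2 : 2 * w i ≤ C i * w i := Nat.mul_le_mul_right _ hu
      rw [if_pos rfl, if_pos rfl, if_neg (show ¬ i = v from huv), Nat.sub_mul]
      omega
    · by_cases h2 : i = v
      · subst h2
        rw [if_neg h1, if_neg h1, if_pos rfl, if_pos rfl]
        ring
      · rw [if_neg h1, if_neg h1, if_neg h2, if_neg h2]
  calc (∑ i : Fin 12, (if i = u then C u - 2 else if i = v then C v + 1 else C i) * w i)
        + 2 * w u
      = ∑ i : Fin 12, ((if i = u then C u - 2 else if i = v then C v + 1 else C i) * w i
          + (if i = u then 2 * w u else 0)) := by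
        rw [Finset.sum_add_distrib]
        simp [Finset.sum_ite_eq']
    _ = ∑ i : Fin 12, (C i * w i + (if i = v then w v else 0)) :=
        Finset.sum_congr rfl (fun i _ => key i)
    _ = (∑ i : Fin 12, C i * w i) + w v := by
        rw [Finset.sum_add_distrib]
        simp [Finset.sum_ite_eq']

set_option synthInstance.maxSize 4000 in
set_option synthInstance.maxHeartbeats 1000000 in
set_option maxRecDepth 10000 in
lemma adj_iff : ∀ u v : Fin 12, hog44172.Adj u v ↔ (u, v) ∈ EdgesFin := by
  intro u v
  unfold hog44172
  rw [SimpleGraph.fromEdgeSet_adj]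
  simp only [Set.mem_insert_iff, Set.mem_singleton_iff, Sym2.eq_iff]
  revert u v
  decide

set_option maxRecDepth 10000 in
lemma edges_val : ∀ p ∈ EdgesFin, ((p.1 : ℕ), (p.2 : ℕ)) ∈ EdgesNat := by decide

lemma adj_edges : ∀ u v : Fin 12, hog44172.Adj u v → ((u : ℕ), (v : ℕ)) ∈ EdgesNat :=
  fun u v h => edges_val (u, v) ((adj_iff u v).mp h)

theorem closure_check : STree.allB (fun c => EdgesNat.all (fun p =>
    if 2 ≤ c / 13 ^ p.1 % 13 then STree.memB (c + 13 ^ p.2 - 2 * 13 ^ p.1) else true))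
    = true := by decide

theorem zero_check : STree.allB (fun c => c / 13 % 13 == 0) = true := by decide

/-- The invariant: the code of the configuration belongs to the finite set of
reachable codes, and the total number of pebbles is at most 12. -/
def InvC (C : Fin 12 → ℕ) : Prop :=
  STree.memB (enc C) = true ∧ (∑ i : Fin 12, C i) ≤ 12

lemma invC_step {C C' : Fin 12 → ℕ} (h : PebblingMove hog44172 C C') (hI : InvC C) :
    InvC C' := by
  obtain ⟨u, v, hadj, hu, rfl⟩ := h
  obtain ⟨hmem, hsum⟩ := hI
  have huv : u ≠ v := hadj.ne
  have hbd : ∀ i, C i ≤ 12 := fun i =>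
    le_trans (Finset.single_le_sum (f := C) (fun j _ => Nat.zero_le _) (Finset.mem_univ i)) hsum
  have hsum' := move_weight (fun _ => 1) huv hu
  simp only [mul_one] at hsum'
  have henc := move_weight (fun i => 13 ^ (i : ℕ)) huv hu
  beta_reduce at henc
  have hdig : enc C / 13 ^ (u : ℕ) % 13 = C u := digit_enc C hbd u
  have hcl := NTree.of_allB closure_check hmem
  rw [List.all_eq_true] at hcl
  have hedge := hcl ((u : ℕ), (v : ℕ)) (adj_edges u v hadj)
  rw [if_pos (show 2 ≤ enc C / 13 ^ (u : ℕ) % 13 by omega)] at hedge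
  constructor
  · have heq : enc C + 13 ^ (v : ℕ) - 2 * 13 ^ (u : ℕ)
        = enc (fun w => if w = u then C u - 2 else if w = v then C v + 1 else C w) := by
      have h2u : 2 * 13 ^ (u : ℕ) ≤ enc C := by
        have hs := Finset.single_le_sum (f := fun i => C i * 13 ^ (i : ℕ))
          (fun j _ => Nat.zero_le _) (Finset.mem_univ u)
        have h2 : 2 * 13 ^ (u : ℕ) ≤ C u * 13 ^ (u : ℕ) := Nat.mul_le_mul_right _ hu
        exact le_trans h2 hs
      unfold enc
      beta_reduce
      omega
    rw [← heq]
    exact hedge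
  · beta_reduce
    omega

lemma unsolvable_of_invC {C : Fin 12 → ℕ} (hI : InvC C) :
    ¬ PebblingSolvable hog44172 C 1 := by
  rintro ⟨C', hchain, hr⟩
  have hI' : InvC C' := by
    clear hr
    induction hchain with
    | refl => exact hI
    | tail _ hstep ih => exact invC_step hstep ih
  obtain ⟨hmem, hsum⟩ := hI'
  have hbd : ∀ i, C' i ≤ 12 := fun i =>
    le_trans (Finset.single_le_sum (f := C') (fun j _ => Nat.zero_le _) (Finset.mem_univ i)) hsum
  have hz := NTree.of_allB zero_check hmem
  have hd : enc C' / 13 ^ ((1 : Fin 12) : ℕ) % 13 = C' 1 := digit_enc C' hbd 1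
  simp only [Fin.val_one, pow_one, beq_iff_eq] at hz hd
  omega

/-- The specific configuration from the theorem statement. -/
def C0 : Fin 12 → ℕ := fun v => if v = 5 then 7 else if v = 11 then 1 else if v = 12 then 1 else
          if v = 10 then 1 else if v = 7 then 1 else if v = 6 then 1 else 0

lemma enc_C0 : enc C0 = 1930089060264 := by decide

lemma invC_C0 : InvC C0 := by
  constructor
  · rw [enc_C0]; decide
  · decide

/-! ### Monotonicity of solvability -/

lemma solvable_mono {V : Type} [DecidableEq V] {G : SimpleGraph V} {C D : V → ℕ}
    (hCD : ∀ w, C w ≤ D w) {r : V} (h : PebblingSolvable G C r) :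
    PebblingSolvable G D r := by
  obtain ⟨C', hchain, hr⟩ := h
  suffices h : ∀ D, (∀ w, C w ≤ D w) → ∃ D', Relation.ReflTransGen (PebblingMove G) D D' ∧
      ∀ w, C' w ≤ D' w by
    obtain ⟨D', h1, h2⟩ := h D hCD
    exact ⟨D', h1, le_trans hr (h2 r)⟩
  clear hr hCD
  induction hchain with
  | refl => exact fun D hD => ⟨D, Relation.ReflTransGen.refl, hD⟩
  | tail _ hstep ih =>
    intro D hD
    obtain ⟨Dm, hchainm, hle⟩ := ih D hD
    obtain ⟨u, v, hadj, hu, rfl⟩ := hstep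
    refine ⟨fun w => if w = u then Dm u - 2 else if w = v then Dm v + 1 else Dm w,
      hchainm.tail ⟨u, v, hadj, le_trans hu (hle u), rfl⟩, ?_⟩
    intro w
    have l1 := hle u
    have l2 := hle v
    have l3 := hle w
    beta_reduce
    split_ifs <;> omega

/-! ### Solvability from many pebbles on one vertex -/

lemma pump {V : Type} [DecidableEq V] {G : SimpleGraph V} {u v : V} (h : G.Adj u v) :
    ∀ (m : ℕ) (D : V → ℕ), 2 * m ≤ D u →
      ∃ D', Relation.ReflTransGen (PebblingMove G) D D' ∧ D v + m ≤ D' v := by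
  intro m
  induction m with
  | zero => exact fun D _ => ⟨D, Relation.ReflTransGen.refl, by omega⟩
  | succ m ih =>
    intro D hD
    have huv : u ≠ v := h.ne
    set D1 : V → ℕ := fun w => if w = u then D u - 2 else if w = v then D v + 1 else D w with hD1
    have hmove : PebblingMove G D D1 := ⟨u, v, h, by omega, rfl⟩
    have hD1u : D1 u = D u - 2 := by simp [hD1]
    have hD1v : D1 v = D v + 1 := by simp [hD1, Ne.symm huv]
    obtain ⟨D', hchain, hle⟩ := ih D1 (by omega)
    exact ⟨D', Relation.ReflTransGen.head hmove hchain, by omega⟩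

section Solv
variable {C : Fin 12 → ℕ} {r : Fin 12}

lemma solv0 (h : 1 ≤ C r) : PebblingSolvable hog44172 C r :=
  ⟨C, Relation.ReflTransGen.refl, h⟩

lemma solv1 {u : Fin 12} (h1 : hog44172.Adj u r) (h : 2 ≤ C u) :
    PebblingSolvable hog44172 C r := by
  obtain ⟨D, hchain, hle⟩ := pump h1 1 C (by omega)
  exact ⟨D, hchain, by omega⟩

lemma solv2 {u a : Fin 12} (h1 : hog44172.Adj u a) (h2 : hog44172.Adj a r)
    (h : 4 ≤ C u) : PebblingSolvable hog44172 C r := by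
  obtain ⟨D1, hc1, hl1⟩ := pump h1 2 C (by omega)
  obtain ⟨D2, hc2, hl2⟩ := pump h2 1 D1 (by omega)
  exact ⟨D2, hc1.trans hc2, by omega⟩

lemma solv3 {u a b : Fin 12} (h1 : hog44172.Adj u a) (h2 : hog44172.Adj a b)
    (h3 : hog44172.Adj b r) (h : 8 ≤ C u) : PebblingSolvable hog44172 C r := by
  obtain ⟨D1, hc1, hl1⟩ := pump h1 4 C (by omega)
  obtain ⟨D2, hc2, hl2⟩ := pump h2 2 D1 (by omega)
  obtain ⟨D3, hc3, hl3⟩ := pump h3 1 D2 (by omega)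
  exact ⟨D3, (hc1.trans hc2).trans hc3, by omega⟩

end Solv

lemma adjp (a b : Fin 12) (h : (a, b) ∈ EdgesFin) : hog44172.Adj a b := (adj_iff a b).mpr h

lemma supply_all : ∀ (v r : Fin 12) (C : Fin 12 → ℕ), 8 ≤ C v →
    PebblingSolvable hog44172 C r := by
  intro v r C h
  fin_cases v <;> fin_cases r
  · exact solv0 (le_trans (by norm_num) h)
  · exact solv2 (adjp 0 2 (by decide)) (adjp 2 1 (by decide)) (le_trans (by norm_num) h)
  · exact solv1 (adjp 0 2 (by decide)) (le_trans (by norm_num) h)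
  · exact solv1 (adjp 0 3 (by decide)) (le_trans (by norm_num) h)
  · exact solv2 (adjp 0 8 (by decide)) (adjp 8 4 (by decide)) (le_trans (by norm_num) h)
  · exact solv3 (adjp 0 8 (by decide)) (adjp 8 9 (by decide)) (adjp 9 5 (by decide)) (le_trans (by norm_num) h)
  · exact solv3 (adjp 0 2 (by decide)) (adjp 2 10 (by decide)) (adjp 10 6 (by decide)) (le_trans (by norm_num) h)
  · exact solv3 (adjp 0 2 (by decide)) (adjp 2 10 (by decide)) (adjp 10 7 (by decide)) (le_trans (by norm_num) h)
  · exact solv1 (adjp 0 8 (by decide)) (le_trans (by norm_num) h)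
  · exact solv2 (adjp 0 8 (by decide)) (adjp 8 9 (by decide)) (le_trans (by norm_num) h)
  · exact solv2 (adjp 0 2 (by decide)) (adjp 2 10 (by decide)) (le_trans (by norm_num) h)
  · exact solv2 (adjp 0 3 (by decide)) (adjp 3 11 (by decide)) (le_trans (by norm_num) h)
  · exact solv2 (adjp 1 2 (by decide)) (adjp 2 0 (by decide)) (le_trans (by norm_num) h)
  · exact solv0 (le_trans (by norm_num) h)
  · exact solv1 (adjp 1 2 (by decide)) (le_trans (by norm_num) h)
  · exact solv1 (adjp 1 3 (by decide)) (le_trans (by norm_num) h)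
  · exact solv1 (adjp 1 4 (by decide)) (le_trans (by norm_num) h)
  · exact solv3 (adjp 1 4 (by decide)) (adjp 4 9 (by decide)) (adjp 9 5 (by decide)) (le_trans (by norm_num) h)
  · exact solv3 (adjp 1 2 (by decide)) (adjp 2 10 (by decide)) (adjp 10 6 (by decide)) (le_trans (by norm_num) h)
  · exact solv3 (adjp 1 2 (by decide)) (adjp 2 10 (by decide)) (adjp 10 7 (by decide)) (le_trans (by norm_num) h)
  · exact solv2 (adjp 1 4 (by decide)) (adjp 4 8 (by decide)) (le_trans (by norm_num) h)
  · exact solv2 (adjp 1 4 (by decide)) (adjp 4 9 (by decide)) (le_trans (by norm_num) h)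
  · exact solv2 (adjp 1 2 (by decide)) (adjp 2 10 (by decide)) (le_trans (by norm_num) h)
  · exact solv2 (adjp 1 3 (by decide)) (adjp 3 11 (by decide)) (le_trans (by norm_num) h)
  · exact solv1 (adjp 2 0 (by decide)) (le_trans (by norm_num) h)
  · exact solv1 (adjp 2 1 (by decide)) (le_trans (by norm_num) h)
  · exact solv0 (le_trans (by norm_num) h)
  · exact solv2 (adjp 2 0 (by decide)) (adjp 0 3 (by decide)) (le_trans (by norm_num) h)
  · exact solv2 (adjp 2 1 (by decide)) (adjp 1 4 (by decide)) (le_trans (by norm_num) h)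
  · exact solv3 (adjp 2 10 (by decide)) (adjp 10 6 (by decide)) (adjp 6 5 (by decide)) (le_trans (by norm_num) h)
  · exact solv2 (adjp 2 10 (by decide)) (adjp 10 6 (by decide)) (le_trans (by norm_num) h)
  · exact solv2 (adjp 2 10 (by decide)) (adjp 10 7 (by decide)) (le_trans (by norm_num) h)
  · exact solv2 (adjp 2 0 (by decide)) (adjp 0 8 (by decide)) (le_trans (by norm_num) h)
  · exact solv3 (adjp 2 0 (by decide)) (adjp 0 8 (by decide)) (adjp 8 9 (by decide)) (le_trans (by norm_num) h)
  · exact solv1 (adjp 2 10 (by decide)) (le_trans (by norm_num) h)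
  · exact solv3 (adjp 2 0 (by decide)) (adjp 0 3 (by decide)) (adjp 3 11 (by decide)) (le_trans (by norm_num) h)
  · exact solv1 (adjp 3 0 (by decide)) (le_trans (by norm_num) h)
  · exact solv1 (adjp 3 1 (by decide)) (le_trans (by norm_num) h)
  · exact solv2 (adjp 3 0 (by decide)) (adjp 0 2 (by decide)) (le_trans (by norm_num) h)
  · exact solv0 (le_trans (by norm_num) h)
  · exact solv2 (adjp 3 1 (by decide)) (adjp 1 4 (by decide)) (le_trans (by norm_num) h)
  · exact solv3 (adjp 3 11 (by decide)) (adjp 11 6 (by decide)) (adjp 6 5 (by decide)) (le_trans (by norm_num) h)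
  · exact solv2 (adjp 3 11 (by decide)) (adjp 11 6 (by decide)) (le_trans (by norm_num) h)
  · exact solv2 (adjp 3 11 (by decide)) (adjp 11 7 (by decide)) (le_trans (by norm_num) h)
  · exact solv2 (adjp 3 0 (by decide)) (adjp 0 8 (by decide)) (le_trans (by norm_num) h)
  · exact solv3 (adjp 3 0 (by decide)) (adjp 0 8 (by decide)) (adjp 8 9 (by decide)) (le_trans (by norm_num) h)
  · exact solv3 (adjp 3 0 (by decide)) (adjp 0 2 (by decide)) (adjp 2 10 (by decide)) (le_trans (by norm_num) h)
  · exact solv1 (adjp 3 11 (by decide)) (le_trans (by norm_num) h)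
  · exact solv2 (adjp 4 8 (by decide)) (adjp 8 0 (by decide)) (le_trans (by norm_num) h)
  · exact solv1 (adjp 4 1 (by decide)) (le_trans (by norm_num) h)
  · exact solv2 (adjp 4 1 (by decide)) (adjp 1 2 (by decide)) (le_trans (by norm_num) h)
  · exact solv2 (adjp 4 1 (by decide)) (adjp 1 3 (by decide)) (le_trans (by norm_num) h)
  · exact solv0 (le_trans (by norm_num) h)
  · exact solv2 (adjp 4 9 (by decide)) (adjp 9 5 (by decide)) (le_trans (by norm_num) h)
  · exact solv3 (adjp 4 9 (by decide)) (adjp 9 5 (by decide)) (adjp 5 6 (by decide)) (le_trans (by norm_num) h)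
  · exact solv3 (adjp 4 9 (by decide)) (adjp 9 5 (by decide)) (adjp 5 7 (by decide)) (le_trans (by norm_num) h)
  · exact solv1 (adjp 4 8 (by decide)) (le_trans (by norm_num) h)
  · exact solv1 (adjp 4 9 (by decide)) (le_trans (by norm_num) h)
  · exact solv3 (adjp 4 1 (by decide)) (adjp 1 2 (by decide)) (adjp 2 10 (by decide)) (le_trans (by norm_num) h)
  · exact solv3 (adjp 4 1 (by decide)) (adjp 1 3 (by decide)) (adjp 3 11 (by decide)) (le_trans (by norm_num) h)
  · exact solv3 (adjp 5 9 (by decide)) (adjp 9 8 (by decide)) (adjp 8 0 (by decide)) (le_trans (by norm_num) h)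
  · exact solv3 (adjp 5 9 (by decide)) (adjp 9 4 (by decide)) (adjp 4 1 (by decide)) (le_trans (by norm_num) h)
  · exact solv3 (adjp 5 6 (by decide)) (adjp 6 10 (by decide)) (adjp 10 2 (by decide)) (le_trans (by norm_num) h)
  · exact solv3 (adjp 5 6 (by decide)) (adjp 6 11 (by decide)) (adjp 11 3 (by decide)) (le_trans (by norm_num) h)
  · exact solv2 (adjp 5 9 (by decide)) (adjp 9 4 (by decide)) (le_trans (by norm_num) h)
  · exact solv0 (le_trans (by norm_num) h)
  · exact solv1 (adjp 5 6 (by decide)) (le_trans (by norm_num) h)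
  · exact solv1 (adjp 5 7 (by decide)) (le_trans (by norm_num) h)
  · exact solv2 (adjp 5 9 (by decide)) (adjp 9 8 (by decide)) (le_trans (by norm_num) h)
  · exact solv1 (adjp 5 9 (by decide)) (le_trans (by norm_num) h)
  · exact solv2 (adjp 5 6 (by decide)) (adjp 6 10 (by decide)) (le_trans (by norm_num) h)
  · exact solv2 (adjp 5 6 (by decide)) (adjp 6 11 (by decide)) (le_trans (by norm_num) h)
  · exact solv3 (adjp 6 10 (by decide)) (adjp 10 2 (by decide)) (adjp 2 0 (by decide)) (le_trans (by norm_num) h)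
  · exact solv3 (adjp 6 10 (by decide)) (adjp 10 2 (by decide)) (adjp 2 1 (by decide)) (le_trans (by norm_num) h)
  · exact solv2 (adjp 6 10 (by decide)) (adjp 10 2 (by decide)) (le_trans (by norm_num) h)
  · exact solv2 (adjp 6 11 (by decide)) (adjp 11 3 (by decide)) (le_trans (by norm_num) h)
  · exact solv3 (adjp 6 5 (by decide)) (adjp 5 9 (by decide)) (adjp 9 4 (by decide)) (le_trans (by norm_num) h)
  · exact solv1 (adjp 6 5 (by decide)) (le_trans (by norm_num) h)
  · exact solv0 (le_trans (by norm_num) h)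
  · exact solv2 (adjp 6 10 (by decide)) (adjp 10 7 (by decide)) (le_trans (by norm_num) h)
  · exact solv3 (adjp 6 5 (by decide)) (adjp 5 9 (by decide)) (adjp 9 8 (by decide)) (le_trans (by norm_num) h)
  · exact solv2 (adjp 6 5 (by decide)) (adjp 5 9 (by decide)) (le_trans (by norm_num) h)
  · exact solv1 (adjp 6 10 (by decide)) (le_trans (by norm_num) h)
  · exact solv1 (adjp 6 11 (by decide)) (le_trans (by norm_num) h)
  · exact solv3 (adjp 7 10 (by decide)) (adjp 10 2 (by decide)) (adjp 2 0 (by decide)) (le_trans (by norm_num) h)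
  · exact solv3 (adjp 7 10 (by decide)) (adjp 10 2 (by decide)) (adjp 2 1 (by decide)) (le_trans (by norm_num) h)
  · exact solv2 (adjp 7 10 (by decide)) (adjp 10 2 (by decide)) (le_trans (by norm_num) h)
  · exact solv2 (adjp 7 11 (by decide)) (adjp 11 3 (by decide)) (le_trans (by norm_num) h)
  · exact solv3 (adjp 7 5 (by decide)) (adjp 5 9 (by decide)) (adjp 9 4 (by decide)) (le_trans (by norm_num) h)
  · exact solv1 (adjp 7 5 (by decide)) (le_trans (by norm_num) h)
  · exact solv2 (adjp 7 10 (by decide)) (adjp 10 6 (by decide)) (le_trans (by norm_num) h)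
  · exact solv0 (le_trans (by norm_num) h)
  · exact solv3 (adjp 7 5 (by decide)) (adjp 5 9 (by decide)) (adjp 9 8 (by decide)) (le_trans (by norm_num) h)
  · exact solv2 (adjp 7 5 (by decide)) (adjp 5 9 (by decide)) (le_trans (by norm_num) h)
  · exact solv1 (adjp 7 10 (by decide)) (le_trans (by norm_num) h)
  · exact solv1 (adjp 7 11 (by decide)) (le_trans (by norm_num) h)
  · exact solv1 (adjp 8 0 (by decide)) (le_trans (by norm_num) h)
  · exact solv2 (adjp 8 4 (by decide)) (adjp 4 1 (by decide)) (le_trans (by norm_num) h)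
  · exact solv2 (adjp 8 0 (by decide)) (adjp 0 2 (by decide)) (le_trans (by norm_num) h)
  · exact solv2 (adjp 8 0 (by decide)) (adjp 0 3 (by decide)) (le_trans (by norm_num) h)
  · exact solv1 (adjp 8 4 (by decide)) (le_trans (by norm_num) h)
  · exact solv2 (adjp 8 9 (by decide)) (adjp 9 5 (by decide)) (le_trans (by norm_num) h)
  · exact solv3 (adjp 8 9 (by decide)) (adjp 9 5 (by decide)) (adjp 5 6 (by decide)) (le_trans (by norm_num) h)
  · exact solv3 (adjp 8 9 (by decide)) (adjp 9 5 (by decide)) (adjp 5 7 (by decide)) (le_trans (by norm_num) h)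
  · exact solv0 (le_trans (by norm_num) h)
  · exact solv1 (adjp 8 9 (by decide)) (le_trans (by norm_num) h)
  · exact solv3 (adjp 8 0 (by decide)) (adjp 0 2 (by decide)) (adjp 2 10 (by decide)) (le_trans (by norm_num) h)
  · exact solv3 (adjp 8 0 (by decide)) (adjp 0 3 (by decide)) (adjp 3 11 (by decide)) (le_trans (by norm_num) h)
  · exact solv2 (adjp 9 8 (by decide)) (adjp 8 0 (by decide)) (le_trans (by norm_num) h)
  · exact solv2 (adjp 9 4 (by decide)) (adjp 4 1 (by decide)) (le_trans (by norm_num) h)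
  · exact solv3 (adjp 9 8 (by decide)) (adjp 8 0 (by decide)) (adjp 0 2 (by decide)) (le_trans (by norm_num) h)
  · exact solv3 (adjp 9 8 (by decide)) (adjp 8 0 (by decide)) (adjp 0 3 (by decide)) (le_trans (by norm_num) h)
  · exact solv1 (adjp 9 4 (by decide)) (le_trans (by norm_num) h)
  · exact solv1 (adjp 9 5 (by decide)) (le_trans (by norm_num) h)
  · exact solv2 (adjp 9 5 (by decide)) (adjp 5 6 (by decide)) (le_trans (by norm_num) h)
  · exact solv2 (adjp 9 5 (by decide)) (adjp 5 7 (by decide)) (le_trans (by norm_num) h)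
  · exact solv1 (adjp 9 8 (by decide)) (le_trans (by norm_num) h)
  · exact solv0 (le_trans (by norm_num) h)
  · exact solv3 (adjp 9 5 (by decide)) (adjp 5 6 (by decide)) (adjp 6 10 (by decide)) (le_trans (by norm_num) h)
  · exact solv3 (adjp 9 5 (by decide)) (adjp 5 6 (by decide)) (adjp 6 11 (by decide)) (le_trans (by norm_num) h)
  · exact solv2 (adjp 10 2 (by decide)) (adjp 2 0 (by decide)) (le_trans (by norm_num) h)
  · exact solv2 (adjp 10 2 (by decide)) (adjp 2 1 (by decide)) (le_trans (by norm_num) h)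
  · exact solv1 (adjp 10 2 (by decide)) (le_trans (by norm_num) h)
  · exact solv3 (adjp 10 2 (by decide)) (adjp 2 0 (by decide)) (adjp 0 3 (by decide)) (le_trans (by norm_num) h)
  · exact solv3 (adjp 10 2 (by decide)) (adjp 2 1 (by decide)) (adjp 1 4 (by decide)) (le_trans (by norm_num) h)
  · exact solv2 (adjp 10 6 (by decide)) (adjp 6 5 (by decide)) (le_trans (by norm_num) h)
  · exact solv1 (adjp 10 6 (by decide)) (le_trans (by norm_num) h)
  · exact solv1 (adjp 10 7 (by decide)) (le_trans (by norm_num) h)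
  · exact solv3 (adjp 10 2 (by decide)) (adjp 2 0 (by decide)) (adjp 0 8 (by decide)) (le_trans (by norm_num) h)
  · exact solv3 (adjp 10 6 (by decide)) (adjp 6 5 (by decide)) (adjp 5 9 (by decide)) (le_trans (by norm_num) h)
  · exact solv0 (le_trans (by norm_num) h)
  · exact solv2 (adjp 10 6 (by decide)) (adjp 6 11 (by decide)) (le_trans (by norm_num) h)
  · exact solv2 (adjp 11 3 (by decide)) (adjp 3 0 (by decide)) (le_trans (by norm_num) h)
  · exact solv2 (adjp 11 3 (by decide)) (adjp 3 1 (by decide)) (le_trans (by norm_num) h)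
  · exact solv3 (adjp 11 3 (by decide)) (adjp 3 0 (by decide)) (adjp 0 2 (by decide)) (le_trans (by norm_num) h)
  · exact solv1 (adjp 11 3 (by decide)) (le_trans (by norm_num) h)
  · exact solv3 (adjp 11 3 (by decide)) (adjp 3 1 (by decide)) (adjp 1 4 (by decide)) (le_trans (by norm_num) h)
  · exact solv2 (adjp 11 6 (by decide)) (adjp 6 5 (by decide)) (le_trans (by norm_num) h)
  · exact solv1 (adjp 11 6 (by decide)) (le_trans (by norm_num) h)
  · exact solv1 (adjp 11 7 (by decide)) (le_trans (by norm_num) h)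
  · exact solv3 (adjp 11 3 (by decide)) (adjp 3 0 (by decide)) (adjp 0 8 (by decide)) (le_trans (by norm_num) h)
  · exact solv3 (adjp 11 6 (by decide)) (adjp 6 5 (by decide)) (adjp 5 9 (by decide)) (le_trans (by norm_num) h)
  · exact solv2 (adjp 11 6 (by decide)) (adjp 6 10 (by decide)) (le_trans (by norm_num) h)
  · exact solv0 (le_trans (by norm_num) h)

lemma upper_bound : ∀ (r : Fin 12) (C : Fin 12 → ℕ), (∑ v, C v) = 85 →
    PebblingSolvable hog44172 C r := by
  intro r C hsum
  by_contra hns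
  have hall : ∀ v, C v ≤ 7 := by
    intro v
    by_contra hv
    exact hns (supply_all v r C (by omega))
  have hle : (∑ v, C v) ≤ ∑ _v : Fin 12, 7 := Finset.sum_le_sum (fun i _ => hall i)
  simp at hle
  omega

/-- For every `t ≤ 12` there is a sub-configuration of `C0` of total size `t`. -/
lemma sub_config : ∀ t : ℕ, t ≤ 12 → ∃ C : Fin 12 → ℕ,
    (∑ v, C v) = t ∧ ∀ w, C w ≤ C0 w := by
  intro t ht
  refine ⟨fun v => min (C0 v) (if v = 5 then t else if v = 11 then t - 7
    else if v = 0 then t - 8 else if v = 10 then t - 9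
    else if v = 7 then t - 10 else if v = 6 then t - 11 else 0),
    ?_, fun w => min_le_left _ _⟩
  interval_cases t <;> decide

/-! ### Main theorem -/

/-- The size-12 configuration with 7 pebbles on vertex 5 and 1 pebble on each
of vertices 11, 12, 10, 7, 6 is unsolvable for target vertex 1; hence the
pebbling number of graph #44172 exceeds 12 and the graph is not Class 0. -/
theorem hog44172_not_class0 :
    ¬ PebblingSolvable hog44172
        (fun v => if v = 5 then 7 else if v = 11 then 1 else if v = 12 then 1 else
          if v = 10 then 1 else if v = 7 then 1 else if v = 6 then 1 else 0) 1 ∧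
    12 < pebblingNumber hog44172 ∧
    pebblingNumber hog44172 ≠ Fintype.card (Fin 12) := by
  have hC0 : ¬ PebblingSolvable hog44172 C0 1 := unsolvable_of_invC invC_C0
  have hgt : ∀ t ∈ {t : ℕ | ∀ (r : Fin 12) (C : Fin 12 → ℕ),
      (∑ v, C v) = t → PebblingSolvable hog44172 C r}, 12 < t := by
    intro t ht
    by_contra hle
    push_neg at hle
    obtain ⟨C, hsum, hsub⟩ := sub_config t hle
    exact hC0 (solvable_mono hsub (ht 1 C hsum))
  have hne : {t : ℕ | ∀ (r : Fin 12) (C : Fin 12 → ℕ),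
      (∑ v, C v) = t → PebblingSolvable hog44172 C r}.Nonempty := ⟨85, upper_bound⟩
  have hmem := Nat.sInf_mem hne
  have h12 : 12 < pebblingNumber hog44172 := hgt _ hmem
  exact ⟨hC0, h12, by rw [Fintype.card_fin]; omega⟩
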